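/- For the uniform-target variant of the game with p_v = w_{uv} = 1, identical target payoffs Rᵈ > Pᵈ, λ = 0 (so q_i = 1/n for each of n targets), and one defensive resource, the defender's expected utility for informant set U equals (E[max_i X_i] − |V|/n)(Rᵈ − Pᵈ) + (|Y|/n)Rᵈ + ((n−1)|Y|/n)Pᵈ, where V is the set of attackers connected to U and X_i is the number of reported attackers choosing target i (each of the |V| reported attackers chooses a target uniformly at random). Hence maximizing DefEU(U) is equivalent to maximizing E[max_i X_i] − |V|/n, which is a non-decreasing function of |V|; so it reduces to maximizing |V|, i.e., the maximum coverage problem. -/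

import Mathlib

private def Msup (n v : ℕ) (f : Fin v → Fin n) : ℕ :=
  Finset.univ.sup fun i : Fin n => (Finset.univ.filter fun b : Fin v => f b = i).card

private lemma Msup_cons_le (n v : ℕ) (g : Fin v → Fin n) (j : Fin n) :
    Msup n v g ≤ Msup n (v + 1) (Fin.cons j g) := by
  apply Finset.sup_le
  intro i _
  refine le_trans ?_ (Finset.le_sup (f := fun i : Fin n =>
    (Finset.univ.filter fun b : Fin (v+1) => (Fin.cons j g : Fin (v+1) → Fin n) b = i).card) (Finset.mem_univ i))
  apply Finset.card_le_card_of_injOn (fun b => Fin.succ b)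
  · intro b hb
    simp only [Finset.mem_filter, Finset.mem_univ, true_and] at hb ⊢
    simpa [Fin.cons_succ] using hb
  · intro a _ b _ h
    exact Fin.succ_injective _ h

private lemma Msup_cons_succ (n v : ℕ) (hn : 0 < n) (g : Fin v → Fin n) :
    ∃ j : Fin n, Msup n v g + 1 ≤ Msup n (v + 1) (Fin.cons j g) := by
  haveI : NeZero n := ⟨hn.ne'⟩
  obtain ⟨i₀, _, hi₀⟩ := Finset.exists_mem_eq_sup (Finset.univ : Finset (Fin n))
    Finset.univ_nonempty (fun i : Fin n => (Finset.univ.filter fun b : Fin v => g b = i).card)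
  refine ⟨i₀, ?_⟩
  have hsub : insert (0 : Fin (v+1))
      ((Finset.univ.filter fun b : Fin v => g b = i₀).image Fin.succ)
      ⊆ Finset.univ.filter fun b : Fin (v+1) => (Fin.cons i₀ g : Fin (v+1) → Fin n) b = i₀ := by
    intro b hb
    simp only [Finset.mem_insert, Finset.mem_image, Finset.mem_filter, Finset.mem_univ,
      true_and] at hb ⊢
    rcases hb with rfl | ⟨a, ha, rfl⟩
    · simp
    · simp [ha]
  have hcard : Msup n v g + 1 ≤
      (Finset.univ.filter fun b : Fin (v+1) => (Fin.cons i₀ g : Fin (v+1) → Fin n) b = i₀).card := by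
    refine le_trans ?_ (Finset.card_le_card hsub)
    rw [Finset.card_insert_of_notMem, Finset.card_image_of_injective _ (Fin.succ_injective _)]
    · rw [Msup, ← hi₀]
    · simp only [Finset.mem_image]
      rintro ⟨a, _, ha⟩
      exact (Fin.succ_ne_zero a) ha
  refine le_trans hcard (Finset.le_sup (f := fun i : Fin n =>
    (Finset.univ.filter fun b : Fin (v+1) =>
      (Fin.cons i₀ g : Fin (v+1) → Fin n) b = i).card) (Finset.mem_univ i₀))

private lemma sum_cons_ge (n v : ℕ) (hn : 0 < n) (g : Fin v → Fin n) :
    n * Msup n v g + 1 ≤ ∑ j : Fin n, Msup n (v + 1) (Fin.cons j g) := by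
  obtain ⟨j₀, hj₀⟩ := Msup_cons_succ n v hn g
  haveI : NeZero n := ⟨hn.ne'⟩
  have : ∑ _j : Fin n, Msup n v g < ∑ j : Fin n, Msup n (v + 1) (Fin.cons j g) :=
    Finset.sum_lt_sum (fun j _ => Msup_cons_le n v g j)
      ⟨j₀, Finset.mem_univ j₀, lt_of_lt_of_le (Nat.lt_succ_self _) hj₀⟩
  simpa [Finset.sum_const, Finset.card_univ, mul_comm] using Nat.succ_le_of_lt this

private lemma sum_Msup_succ (n v : ℕ) (hn : 0 < n) :
    n * (∑ g : Fin v → Fin n, Msup n v g) + n ^ v ≤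
      ∑ f : Fin (v+1) → Fin n, Msup n (v+1) f := by
  have he : ∑ f : Fin (v+1) → Fin n, Msup n (v+1) f
      = ∑ p : Fin n × (Fin v → Fin n), Msup n (v+1) (Fin.cons p.1 p.2) := by
    rw [← Fintype.sum_equiv (Fin.consEquiv fun _ : Fin (v+1) => Fin n)
      (fun p => Msup n (v+1) (Fin.cons p.1 p.2)) (fun f => Msup n (v+1) f)]
    intro p
    rfl
  rw [he, Fintype.sum_prod_type_right]
  calc n * (∑ g : Fin v → Fin n, Msup n v g) + n ^ v
      = ∑ g : Fin v → Fin n, (n * Msup n v g + 1) := by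
        rw [Finset.sum_add_distrib, Finset.mul_sum]
        simp [Finset.card_univ]
    _ ≤ _ := Finset.sum_le_sum fun g _ => sum_cons_ge n v hn g

/-- Uniform-target reduction for NP-hardness: with p_v = w_uv = 1, identical
payoffs Rᵈ > Pᵈ, λ = 0 and one resource, the defender's expected utility when
v attackers are reported (out of Ytot) equals
(E[max_i X_i] − v/n)(Rᵈ−Pᵈ) + (Ytot/n)Rᵈ + ((n−1)Ytot/n)Pᵈ,
which is non-decreasing in v; hence maximizing DefEU reduces to maximizing the
number of reported attackers. -/
theorem stmt_9 (n : ℕ) (hn : 0 < n) (Ytot : ℕ) (Rd Pd : ℝ) (hRP : Pd < Rd)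
    (M : ∀ v : ℕ, (Fin v → Fin n) → ℕ)
    (hM : ∀ v f, M v f = Finset.univ.sup fun i : Fin n =>
      (Finset.univ.filter fun b : Fin v => f b = i).card)
    (Emax : ℕ → ℝ)
    (hE : ∀ v, Emax v = (∑ f : Fin v → Fin n, (M v f : ℝ)) / n ^ v)
    (DefEU : ℕ → ℝ)
    (hD : ∀ v, DefEU v = (∑ f : Fin v → Fin n,
        ((M v f : ℝ) * Rd + ((v : ℝ) - (M v f : ℝ)) * Pd
          + (((Ytot : ℝ) - v) / n) * Rd
          + (((Ytot : ℝ) - v) * ((n : ℝ) - 1) / n) * Pd)) / n ^ v) :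
    (∀ v, DefEU v = (Emax v - v / n) * (Rd - Pd)
        + ((Ytot : ℝ) / n) * Rd + (((n : ℝ) - 1) * Ytot / n) * Pd) ∧
    (∀ v v' : ℕ, v ≤ v' → DefEU v ≤ DefEU v') := by
  have hn0 : (n : ℝ) ≠ 0 := Nat.cast_ne_zero.mpr hn.ne'
  have hMM : ∀ v f, M v f = Msup n v f := fun v f => hM v f
  have hpow : ∀ v : ℕ, ((n : ℝ) ^ v) ≠ 0 := fun v => pow_ne_zero v hn0
  -- Part 1
  have part1 : ∀ v, DefEU v = (Emax v - v / n) * (Rd - Pd)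
      + ((Ytot : ℝ) / n) * Rd + (((n : ℝ) - 1) * Ytot / n) * Pd := by
    intro v
    rw [hD, hE]
    have hsum : ∑ f : Fin v → Fin n,
        ((M v f : ℝ) * Rd + ((v : ℝ) - (M v f : ℝ)) * Pd
          + (((Ytot : ℝ) - v) / n) * Rd
          + (((Ytot : ℝ) - v) * ((n : ℝ) - 1) / n) * Pd)
        = (∑ f : Fin v → Fin n, (M v f : ℝ)) * (Rd - Pd)
          + (n : ℝ) ^ v * ((v : ℝ) * Pd + (((Ytot : ℝ) - v) / n) * Rd
            + (((Ytot : ℝ) - v) * ((n : ℝ) - 1) / n) * Pd) := by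
      rw [Finset.sum_congr rfl (fun f _ => by ring :
        ∀ f ∈ Finset.univ, ((M v f : ℝ) * Rd + ((v : ℝ) - (M v f : ℝ)) * Pd
          + (((Ytot : ℝ) - v) / n) * Rd
          + (((Ytot : ℝ) - v) * ((n : ℝ) - 1) / n) * Pd)
          = (M v f : ℝ) * (Rd - Pd) + ((v : ℝ) * Pd + (((Ytot : ℝ) - v) / n) * Rd
            + (((Ytot : ℝ) - v) * ((n : ℝ) - 1) / n) * Pd))]
      rw [Finset.sum_add_distrib, ← Finset.sum_mul, Finset.sum_const, Finset.card_univ]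
      simp only [Fintype.card_fun, Fintype.card_fin, nsmul_eq_mul]
      push_cast
      ring
    rw [hsum]
    field_simp
    ring
  refine ⟨part1, ?_⟩
  -- Part 2
  have hstep : ∀ v : ℕ, Emax v - v / n ≤ Emax (v+1) - ((v+1 : ℕ) : ℝ) / n := by
    intro v
    rw [hE, hE]
    have key := sum_Msup_succ n v hn
    have key' : (n : ℝ) * (∑ g : Fin v → Fin n, (M v g : ℝ)) + (n : ℝ) ^ v ≤
        ∑ f : Fin (v+1) → Fin n, (M (v+1) f : ℝ) := by
      have := (Nat.cast_le (α := ℝ)).mpr key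
      push_cast at this
      simpa [hMM, Finset.mul_sum] using this
    set S := ∑ f : Fin v → Fin n, (M v f : ℝ) with hS
    set T := ∑ f : Fin (v+1) → Fin n, (M (v+1) f : ℝ) with hT
    have hpos : (0:ℝ) < (n:ℝ) ^ (v+1) := by positivity
    have h1 : ((n:ℝ) * S + (n:ℝ) ^ v) / (n:ℝ) ^ (v+1) ≤ T / (n:ℝ) ^ (v+1) :=
      (div_le_div_iff_of_pos_right hpos).mpr key'
    have h2 : ((n:ℝ) * S + (n:ℝ) ^ v) / (n:ℝ) ^ (v+1) = S / (n:ℝ) ^ v + 1 / n := by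
      field_simp
      ring
    rw [h2] at h1
    push_cast
    have : ((v:ℝ)+1)/n = (v:ℝ)/n + 1/n := by ring
    rw [this]
    linarith
  have mono : ∀ v v' : ℕ, v ≤ v' → Emax v - v / n ≤ Emax v' - v' / n := by
    intro v v' h
    induction h with
    | refl => exact le_refl _
    | step _ ih => exact le_trans ih (hstep _)
  intro v v' h
  rw [part1, part1]
  have := mul_le_mul_of_nonneg_right (mono v v' h) (sub_nonneg.mpr hRP.le)
  linarith
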